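/- Let t ≥ 1 and let A be the adjacency matrix of the t-blowup of the closed path P_4*, i.e., A = P ⊗ J_t where P = [[1,1,0,0],[1,0,1,0],[0,1,0,1],[0,0,1,1]] and J_t is the t×t all-ones matrix. Then A is a symmetric 4t×4t matrix with entries in {0,1} whose eigenvalues are 2t, √2·t, 0 with multiplicity 4t−3, and −√2·t; in particular, with n = 4t, λ_2(A) − λ_n(A) = 2√2·t = n/√2. -/

import Mathlib

open Kronecker Matrix

open Polynomial in
lemma my_eval_charpoly {n : Type*} [DecidableEq n] [Fintype n] (M : Matrix n n ℝ) (x : ℝ) :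
    M.charpoly.eval x = (x • (1 : Matrix n n ℝ) - M).det := by
  rw [Matrix.charpoly, ← Polynomial.coe_evalRingHom, RingHom.map_det]
  congr 1
  ext i j
  by_cases h : i = j <;>
    simp [Matrix.charmatrix_apply, Matrix.one_apply, h, Matrix.smul_apply, Matrix.sub_apply]

lemma my_det_smul_one_sub {n : Type*} [DecidableEq n] [Fintype n] {A : Matrix n n ℝ}
    (hA : A.IsHermitian) (x : ℝ) :
    (x • (1 : Matrix n n ℝ) - A).det = ∏ i, (x - hA.eigenvalues i) := by
  set U : Matrix n n ℝ := (hA.eigenvectorUnitary : Matrix n n ℝ) with hU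
  have hUU : U * star U = 1 := (Matrix.mem_unitaryGroup_iff).mp hA.eigenvectorUnitary.2
  have hUU' : star U * U = 1 := (Matrix.mem_unitaryGroup_iff').mp hA.eigenvectorUnitary.2
  have hspec : A = U * Matrix.diagonal (RCLike.ofReal ∘ hA.eigenvalues) * star U :=
    hA.spectral_theorem
  have key : x • (1 : Matrix n n ℝ) - A
      = U * (Matrix.diagonal (fun i => x - hA.eigenvalues i)) * star U := by
    have h1 : U * (x • (1 : Matrix n n ℝ)) * star U = x • (1 : Matrix n n ℝ) := by
      rw [Matrix.mul_smul, Matrix.smul_mul, Matrix.mul_one, hUU]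
    rw [show Matrix.diagonal (fun i => x - hA.eigenvalues i)
        = x • (1 : Matrix n n ℝ) - Matrix.diagonal (RCLike.ofReal ∘ hA.eigenvalues) by
      rw [Matrix.smul_one_eq_diagonal, ← Matrix.diagonal_sub]; rfl]
    rw [Matrix.mul_sub, Matrix.sub_mul, h1, ← hspec]
  rw [key, Matrix.det_mul, Matrix.det_mul, mul_comm, ← mul_assoc, ← Matrix.det_mul, hUU']
  simp [Matrix.det_diagonal]

open Polynomial in
lemma herm_eig_multiset {n : Type*} [DecidableEq n] [Fintype n] {A : Matrix n n ℝ}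
    (hA : A.IsHermitian) :
    Finset.univ.val.map hA.eigenvalues = A.charpoly.roots := by
  have h1 : A.charpoly
      = ((Finset.univ.val.map hA.eigenvalues).map (fun a => X - C a)).prod := by
    apply Polynomial.funext
    intro x
    rw [my_eval_charpoly, my_det_smul_one_sub hA x, Polynomial.eval_multiset_prod]
    rw [Multiset.map_map]
    simp only [Function.comp, Polynomial.eval_sub, Polynomial.eval_X, Polynomial.eval_C]
    rw [Finset.prod, Multiset.map_map]
    rfl
  rw [h1, Polynomial.roots_multiset_prod_X_sub_C]

open Polynomial in
lemma charpoly_A (t : ℕ)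
    (A : Matrix (Fin 4 × Fin t) (Fin 4 × Fin t) ℝ)
    (hAdef : A = (!![1, 1, 0, 0; 1, 0, 1, 0; 0, 1, 0, 1; 0, 0, 1, 1] :
        Matrix (Fin 4) (Fin 4) ℝ) ⊗ₖ (Matrix.of fun (_ : Fin t) (_ : Fin t) => (1 : ℝ)))
    (ht : 1 ≤ t) :
    A.charpoly = X ^ (4 * t - 3) *
      ((X - C (2 * (t : ℝ))) * (X - C (Real.sqrt 2 * t)) * (X - C (-(Real.sqrt 2 * t)))) := by
  set P : Matrix (Fin 4) (Fin 4) ℝ := !![1, 1, 0, 0; 1, 0, 1, 0; 0, 1, 0, 1; 0, 0, 1, 1] with hP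
  apply Polynomial.eq_of_infinite_eval_eq
  apply Set.Infinite.mono (s := {(0:ℝ)}ᶜ) ?_ ((Set.finite_singleton 0).infinite_compl)
  intro x hx
  simp only [Set.mem_compl_iff, Set.mem_singleton_iff] at hx
  simp only [Set.mem_setOf_eq]
  rw [my_eval_charpoly]
  set M' : Matrix (Fin 4 × Fin t) (Fin 4) ℝ := Matrix.of (fun p b => (-x⁻¹) * P p.1 b) with hM'
  set N : Matrix (Fin 4) (Fin 4 × Fin t) ℝ :=
    Matrix.of (fun b p => if p.1 = b then (1:ℝ) else 0) with hN
  have h1 : x • (1 : Matrix (Fin 4 × Fin t) (Fin 4 × Fin t) ℝ) - A = x • (1 + M' * N) := by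
    ext ⟨a, s⟩ ⟨b, u⟩
    have hMN : (M' * N) (a, s) (b, u) = -x⁻¹ * P a b := by
      rw [Matrix.mul_apply, Finset.sum_eq_single b]
      · simp [hM', hN]
      · intro c _ hc
        simp only [hN, Matrix.of_apply]
        rw [if_neg (fun h => hc h.symm), mul_zero]
      · simp
    simp only [Matrix.sub_apply, Matrix.add_apply, Matrix.smul_apply, hAdef,
      Matrix.kroneckerMap_apply, Matrix.of_apply, hMN, smul_eq_mul]
    rw [mul_add, mul_comm (-x⁻¹) (P a b), ← mul_assoc]
    field_simp
    ring
  rw [h1, Matrix.det_smul, Matrix.det_one_add_mul_comm]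
  have h4 : (1 + N * M' : Matrix (Fin 4) (Fin 4) ℝ) =
      !![1 - x⁻¹*t, -(x⁻¹*t), 0, 0;
         -(x⁻¹*t), 1, -(x⁻¹*t), 0;
         0, -(x⁻¹*t), 1, -(x⁻¹*t);
         0, 0, -(x⁻¹*t), 1 - x⁻¹*t] := by
    ext b c
    fin_cases b <;> fin_cases c <;>
      simp [hN, hM', hP, Matrix.mul_apply, Matrix.one_apply, Fintype.sum_prod_type,
        Fin.sum_univ_four, Finset.sum_const, Finset.card_univ, Matrix.vecHead, Matrix.vecTail] <;>
      ring
  have hdet : (!![1 - x⁻¹*t, -(x⁻¹*t), 0, 0;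
         -(x⁻¹*t), 1, -(x⁻¹*t), 0;
         0, -(x⁻¹*t), 1, -(x⁻¹*t);
         0, 0, -(x⁻¹*t), 1 - x⁻¹*(t:ℝ)] : Matrix (Fin 4) (Fin 4) ℝ).det
      = 1 - 2*(x⁻¹*t) - 2*(x⁻¹*t)^2 + 4*(x⁻¹*t)^3 := by
    simp [Matrix.det_succ_row_zero, Fin.sum_univ_succ,
      show (Fin.succAbove (1 : Fin 4) (2 : Fin 3)) = 3 from by decide]
    ring
  rw [h4, hdet]
  have card4t : Fintype.card (Fin 4 × Fin t) = 4 * t := by simp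
  rw [card4t]
  simp only [Polynomial.eval_mul, Polynomial.eval_pow, Polynomial.eval_sub, Polynomial.eval_X,
    Polynomial.eval_C]
  have h2 : Real.sqrt 2 * Real.sqrt 2 = 2 := Real.mul_self_sqrt (by norm_num)
  have hxpow : x ^ (4 * t) = x ^ (4 * t - 3) * x ^ 3 := by
    rw [← pow_add]; congr 1; omega
  rw [hxpow, mul_assoc]
  congr 1
  have h3 : (x - Real.sqrt 2 * t) * (x - -(Real.sqrt 2 * t)) = x^2 - 2*t^2 := by
    have : (x - Real.sqrt 2 * t) * (x - -(Real.sqrt 2 * t))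
        = x^2 - (Real.sqrt 2 * Real.sqrt 2) * t^2 := by ring
    rw [this, h2]
  rw [mul_assoc, h3]
  field_simp
  ring

open Polynomial in
lemma roots_q (t : ℕ) :
    (X ^ (4*t-3) * ((X - C (2*(t:ℝ))) * (X - C (Real.sqrt 2*t)) * (X - C (-(Real.sqrt 2*t))))).roots
    = (2*(t:ℝ)) ::ₘ (Real.sqrt 2*t) ::ₘ (Multiset.replicate (4*t-3) (0:ℝ) + {-(Real.sqrt 2*t)}) := by
  have h1 : ((X - C (2*(t:ℝ))) * (X - C (Real.sqrt 2*t)) * (X - C (-(Real.sqrt 2*t)))) ≠ 0 :=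
    (((monic_X_sub_C _).mul (monic_X_sub_C _)).mul (monic_X_sub_C _)).ne_zero
  have h2 : ((X - C (2*(t:ℝ))) * (X - C (Real.sqrt 2*t))) ≠ 0 :=
    ((monic_X_sub_C _).mul (monic_X_sub_C _)).ne_zero
  have h0 : (X : ℝ[X]) ^ (4*t-3) ≠ 0 := (monic_X_pow _).ne_zero
  rw [Polynomial.roots_mul (mul_ne_zero h0 h1), Polynomial.roots_pow, Polynomial.roots_X,
    Polynomial.roots_mul h1, Polynomial.roots_mul h2, Polynomial.roots_X_sub_C,
    Polynomial.roots_X_sub_C, Polynomial.roots_X_sub_C, Multiset.nsmul_singleton]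
  rw [show ((2*(t:ℝ)) ::ₘ (Real.sqrt 2*t) ::ₘ (Multiset.replicate (4*t-3) (0:ℝ) + {-(Real.sqrt 2*t)}))
      = {(2*(t:ℝ))} + ({Real.sqrt 2*t} + (Multiset.replicate (4*t-3) (0:ℝ) + {-(Real.sqrt 2*t)}))
    from by rw [Multiset.singleton_add, Multiset.singleton_add]]
  abel

/-- The adjacency matrix `A = P ⊗ J_t` of the `t`-blowup of the closed path
`P₄*` (where `P = !![1,1,0,0; 1,0,1,0; 0,1,0,1; 0,0,1,1]`) is a symmetric `(0,1)`-matrix of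
order `4t` with eigenvalues `2t`, `√2·t`, `0` with multiplicity `4t - 3`, and `-√2·t`; in
particular, with `n = 4t`, `λ_2(A) - λ_n(A) = 2√2·t = n/√2`. -/
theorem blowup_closed_P4_spectrum (t : ℕ) (ht : 1 ≤ t)
    (A : Matrix (Fin 4 × Fin t) (Fin 4 × Fin t) ℝ)
    (hAdef : A = (!![1, 1, 0, 0; 1, 0, 1, 0; 0, 1, 0, 1; 0, 0, 1, 1] :
        Matrix (Fin 4) (Fin 4) ℝ) ⊗ₖ (Matrix.of fun (_ : Fin t) (_ : Fin t) => (1 : ℝ))) :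
    A.IsSymm ∧ (∀ a b, A a b = 0 ∨ A a b = 1) ∧
    ∀ (hA : A.IsHermitian),
      (Finset.univ.val.map hA.eigenvalues =
        (2 * (t : ℝ)) ::ₘ (Real.sqrt 2 * (t : ℝ)) ::ₘ
          (Multiset.replicate (4 * t - 3) (0 : ℝ) + {-(Real.sqrt 2 * (t : ℝ))})) ∧
      ∀ μ : Fin (4 * t) → ℝ, Antitone μ →
        Finset.univ.val.map μ = Finset.univ.val.map hA.eigenvalues →
        μ ⟨1, by omega⟩ - μ ⟨4 * t - 1, by omega⟩ = 2 * Real.sqrt 2 * (t : ℝ) ∧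
        2 * Real.sqrt 2 * (t : ℝ) = ((4 * t : ℕ) : ℝ) / Real.sqrt 2 := by
  have hsqrt2 : Real.sqrt 2 * Real.sqrt 2 = 2 := Real.mul_self_sqrt (by norm_num)
  have hsqrt2pos : (0:ℝ) < Real.sqrt 2 := Real.sqrt_pos.mpr (by norm_num)
  refine ⟨?_, ?_, ?_⟩
  · rw [Matrix.IsSymm]
    ext ⟨a, s⟩ ⟨b, u⟩
    simp only [hAdef, Matrix.transpose_apply, Matrix.kroneckerMap_apply, Matrix.of_apply]
    fin_cases a <;> fin_cases b <;> norm_num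
  · intro ⟨a, s⟩ ⟨b, u⟩
    simp only [hAdef, Matrix.kroneckerMap_apply, Matrix.of_apply]
    fin_cases a <;> fin_cases b <;> norm_num
  · intro hA
    have heig : Finset.univ.val.map hA.eigenvalues =
        (2 * (t : ℝ)) ::ₘ (Real.sqrt 2 * (t : ℝ)) ::ₘ
          (Multiset.replicate (4 * t - 3) (0 : ℝ) + {-(Real.sqrt 2 * (t : ℝ))}) := by
      rw [herm_eig_multiset hA, charpoly_A t A hAdef ht, roots_q t]
    refine ⟨heig, ?_⟩
    intro μ hμ hμmap
    -- the sorted list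
    set L' : List ℝ := 2*(t:ℝ) :: (Real.sqrt 2*(t:ℝ)) ::
      (List.replicate (4*t-3) (0:ℝ) ++ [-(Real.sqrt 2*(t:ℝ))]) with hL'
    have hTL : ((2 * (t : ℝ)) ::ₘ (Real.sqrt 2 * (t : ℝ)) ::ₘ
          (Multiset.replicate (4 * t - 3) (0 : ℝ) + {-(Real.sqrt 2 * (t : ℝ))}) : Multiset ℝ)
        = (L' : Multiset ℝ) := by
      rw [hL', ← Multiset.cons_coe, ← Multiset.cons_coe, ← Multiset.coe_add,
        Multiset.coe_replicate, Multiset.coe_singleton]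
    have hperm : List.Perm (List.ofFn μ) L' := by
      have : (↑(List.ofFn μ) : Multiset ℝ) = (L' : Multiset ℝ) := by
        rw [← Fin.univ_val_map, hμmap, heig, hTL]
      exact Multiset.coe_eq_coe.mp this
    have hs1 : (List.ofFn μ).Pairwise (· ≥ ·) :=
      List.pairwise_ofFn.mpr (fun i j hij => hμ hij.le)
    have h0le : (0:ℝ) ≤ Real.sqrt 2 * t :=
      mul_nonneg (Real.sqrt_nonneg 2) (Nat.cast_nonneg t)
    have hs2le : Real.sqrt 2 ≤ 2 := by nlinarith [Real.sqrt_nonneg 2]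
    have hs2 : L'.Pairwise (· ≥ ·) := by
      simp only [hL', List.pairwise_cons, List.mem_append, List.mem_replicate,
        List.mem_singleton, List.mem_cons]
      refine ⟨?_, ?_, ?_⟩
      · rintro b (h | (⟨-, rfl⟩ | (rfl | h)))
        · subst h; exact mul_le_mul_of_nonneg_right hs2le (Nat.cast_nonneg t)
        · positivity
        · nlinarith [Nat.cast_nonneg (α := ℝ) t]
        · exact absurd h List.not_mem_nil
      · rintro b (⟨-, rfl⟩ | (rfl | h))
        · exact h0le
        · nlinarith
        · exact absurd h List.not_mem_nil
      · rw [List.pairwise_append]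
        refine ⟨List.pairwise_replicate.mpr (Or.inr le_rfl), List.pairwise_singleton _ _, ?_⟩
        rintro a ha b hb
        rw [List.eq_of_mem_replicate ha, List.mem_singleton.mp hb]
        linarith
    haveI : IsAntisymm ℝ (· ≥ ·) := ⟨fun a b h1 h2 => le_antisymm h2 h1⟩
    have heqL : List.ofFn μ = L' := hperm.eq_of_pairwise' hs1 hs2
    have hlen : (List.ofFn μ).length = 4 * t := by simp
    have hμ1 : μ ⟨1, by omega⟩ = Real.sqrt 2 * t := by
      have h1lt : 1 < (List.ofFn μ).length := by omega
      have h := List.getElem_ofFn h1lt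
      rw [← h, List.getElem_of_eq heqL]
      simp [hL']
    have hμlast : μ ⟨4*t - 1, by omega⟩ = -(Real.sqrt 2 * t) := by
      have hlt : 4*t - 1 < (List.ofFn μ).length := by omega
      have h := List.getElem_ofFn hlt
      rw [← h, List.getElem_of_eq heqL]
      simp only [show 4*t - 1 = (4*t-3) + 1 + 1 from by omega, hL', List.getElem_cons_succ]
      rw [List.getElem_append_right (by simp)]
      simp
    rw [hμ1, hμlast]
    constructor
    · ring
    · rw [eq_div_iff (ne_of_gt hsqrt2pos)]
      push_cast
      nlinarith [hsqrt2]
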